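/- arXiv:cs/0603034 — 2 statements merged into one kernel-verified Lean document; each statement's English description precedes it below -/
import Mathlib

section
/- Modularity inside the effect laws: if an action theory ⟨S, E, X, I⟩ satisfies Postulate PS*, then for any classical formulas A, C and any action a, S, E, X, I ⊨_⇝ A → [a]C holds if and only if S, E_a, I_a ⊨_⇝ A → [a]C holds. -/
/-! Classical propositional formulas. -/
inductive PForm (α : Type) : Type
  | atom : α → PForm α
  | fls  : PForm α
  | not  : PForm α → PForm α
  | and  : PForm α → PForm α → PForm α
  | or   : PForm α → PForm α → PForm α
  | imp  : PForm α → PForm α → PForm α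

def PForm.Sat {α : Type} (v : α → Prop) : PForm α → Prop
  | atom p => v p
  | fls => False
  | not φ => ¬ Sat v φ
  | and φ ψ => Sat v φ ∧ Sat v ψ
  | or φ ψ => Sat v φ ∨ Sat v ψ
  | imp φ ψ => Sat v φ → Sat v ψ

/-- Classical (propositional) global consequence. -/
def EntailsCl {α : Type} (Γ : Set (PForm α)) (φ : PForm α) : Prop :=
  ∀ v : α → Prop, (∀ ψ ∈ Γ, PForm.Sat v ψ) → PForm.Sat v φ

/-- Multimodal formulas with one box per action. -/
inductive MForm (Act α : Type) : Type
  | atom : α → MForm Act α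
  | fls  : MForm Act α
  | not  : MForm Act α → MForm Act α
  | and  : MForm Act α → MForm Act α → MForm Act α
  | or   : MForm Act α → MForm Act α → MForm Act α
  | imp  : MForm Act α → MForm Act α → MForm Act α
  | box  : Act → MForm Act α → MForm Act α

def PForm.toM {Act α : Type} : PForm α → MForm Act α
  | .atom p => .atom p
  | .fls => .fls
  | .not φ => .not φ.toM
  | .and φ ψ => .and φ.toM ψ.toM
  | .or φ ψ => .or φ.toM ψ.toM
  | .imp φ ψ => .imp φ.toM ψ.toM

/-- A Kripke model for multimodal K. -/
structure KModel (Act α : Type) where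
  W : Type
  R : Act → W → W → Prop
  V : W → α → Prop

def MForm.Sat {Act α : Type} (M : KModel Act α) : M.W → MForm Act α → Prop
  | w, atom p => M.V w p
  | _, fls => False
  | w, not φ => ¬ Sat M w φ
  | w, and φ ψ => Sat M w φ ∧ Sat M w ψ
  | w, or φ ψ => Sat M w φ ∨ Sat M w ψ
  | w, imp φ ψ => Sat M w φ → Sat M w ψ
  | w, box a φ => ∀ w', M.R a w w' → Sat M w' φ

/-- Global truth in a model. -/
def Glob {Act α : Type} (M : KModel Act α) (Φ : MForm Act α) : Prop :=
  ∀ w : M.W, MForm.Sat M w Φ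

/-- Global consequence in multimodal K. -/
def ConsK {Act α : Type} (Γ : Set (MForm Act α)) (Φ : MForm Act α) : Prop :=
  ∀ M : KModel Act α, (∀ Ψ ∈ Γ, Glob M Ψ) → Glob M Φ

/-- Literals. -/
abbrev Lit (α : Type) := α × Bool

def Lit.Sat {α : Type} (v : α → Prop) (l : Lit α) : Prop :=
  if l.2 then v l.1 else ¬ v l.1

/-- A dependence relation `⇝ ⊆ Act × Lit`. -/
abbrev Dep (Act α : Type) := Act → Lit α → Prop

/-- `⇝`-models: along `R a`, literals independent of `a` persist. -/
def IsDepModel {Act α : Type} (dep : Dep Act α) (M : KModel Act α) : Prop :=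
  ∀ (a : Act) (w w' : M.W), M.R a w w' → ∀ p : α,
    (¬ dep a (p, true) → ¬ M.V w p → ¬ M.V w' p) ∧
    (¬ dep a (p, false) → M.V w p → M.V w' p)

/-- Dependence-based global consequence. -/
def ConsDep {Act α : Type} (dep : Dep Act α) (Γ : Set (MForm Act α)) (Φ : MForm Act α) : Prop :=
  ∀ M : KModel Act α, IsDepModel dep M → (∀ Ψ ∈ Γ, Glob M Ψ) → Glob M Φ

/-- An action theory: static laws `S`, effect laws `E` (antecedent/consequent
pairs), executability laws `X` (antecedents), inexecutability laws `I`
(antecedents). -/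
structure ActionTheory (Act α : Type) where
  S : Set (PForm α)
  E : Act → Set (PForm α × PForm α)
  X : Act → Set (PForm α)
  I : Act → Set (PForm α)

/-- `⟨a⟩Φ`. -/
def MForm.diam {Act α : Type} (a : Act) (Φ : MForm Act α) : MForm Act α :=
  .not (.box a (.not Φ))

/-- Effect law `A → [a]C`. -/
def effLaw {Act α : Type} (a : Act) (e : PForm α × PForm α) : MForm Act α :=
  .imp e.1.toM (.box a e.2.toM)

/-- Executability law `A → ⟨a⟩⊤`. -/
def exeLaw {Act α : Type} (a : Act) (A : PForm α) : MForm Act α :=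
  .imp A.toM (MForm.diam a (.not .fls))

/-- Inexecutability law `A → [a]⊥`. -/
def inexLaw {Act α : Type} (a : Act) (A : PForm α) : MForm Act α :=
  .imp A.toM (.box a .fls)

variable {Act α : Type}

def staticForms (T : ActionTheory Act α) : Set (MForm Act α) := PForm.toM '' T.S
def effForms (T : ActionTheory Act α) (a : Act) : Set (MForm Act α) := effLaw a '' T.E a
def exeForms (T : ActionTheory Act α) (a : Act) : Set (MForm Act α) := exeLaw a '' T.X a
def inexForms (T : ActionTheory Act α) (a : Act) : Set (MForm Act α) := inexLaw a '' T.I a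

/-- The action theory of the single action `a`:  `S ∪ E_a ∪ X_a ∪ I_a`. -/
def formsFor (T : ActionTheory Act α) (a : Act) : Set (MForm Act α) :=
  staticForms T ∪ effForms T a ∪ exeForms T a ∪ inexForms T a

/-- The whole action theory:  `S ∪ E ∪ X ∪ I`. -/
def allForms (T : ActionTheory Act α) : Set (MForm Act α) :=
  staticForms T ∪ (⋃ a, effForms T a) ∪ (⋃ a, exeForms T a) ∪ (⋃ a, inexForms T a)

/-- Postulate PS for action `a`: no implicit static laws. -/
def PS (T : ActionTheory Act α) (dep : Dep Act α) (a : Act) : Prop :=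
  ∀ φ : PForm α, ConsDep dep (formsFor T a) φ.toM → EntailsCl T.S φ

/-- Postulate PS*: no implicit static laws for the whole theory. -/
def PSstar (T : ActionTheory Act α) (dep : Dep Act α) : Prop :=
  ∀ φ : PForm α, ConsDep dep (allForms T) φ.toM → EntailsCl T.S φ

/-- Postulate PI for action `a`: no implicit inexecutability laws. -/
def PIpost (T : ActionTheory Act α) (dep : Dep Act α) (a : Act) : Prop :=
  ∀ A : PForm α, ConsDep dep (formsFor T a) (inexLaw a A) →
    ConsK (staticForms T ∪ inexForms T a) (inexLaw a A)

/-- Postulate PI*: no implicit inexecutability laws for the whole theory. -/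
def PIstar (T : ActionTheory Act α) (dep : Dep Act α) : Prop :=
  ∀ (a : Act) (A : PForm α), ConsDep dep (allForms T) (inexLaw a A) →
    ConsK (staticForms T ∪ ⋃ a', inexForms T a') (inexLaw a A)

/-! ### Auxiliary material for Statement 11 -/

lemma Msat_toM (M : KModel Act α) (w : M.W) (φ : PForm α) :
    MForm.Sat M w φ.toM ↔ PForm.Sat (M.V w) φ := by
  induction φ <;> simp [PForm.toM, MForm.Sat, PForm.Sat, *]

lemma psat_congr {u v : α → Prop} (h : ∀ p, u p ↔ v p) (φ : PForm α) :
    PForm.Sat u φ ↔ PForm.Sat v φ := by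
  induction φ <;> simp [PForm.Sat, *]

open Classical in
/-- Characteristic formula of a valuation. -/
noncomputable def charForm [Fintype α] (v : α → Prop) : PForm α :=
  (Finset.univ : Finset α).toList.foldr
    (fun p acc => .and (if v p then .atom p else .not (.atom p)) acc) (.not .fls)

open Classical in
lemma charForm_sat [Fintype α] (u v : α → Prop) :
    PForm.Sat u (charForm v) ↔ ∀ p : α, u p ↔ v p := by
  have key : ∀ l : List α,
      PForm.Sat u (l.foldr
        (fun p acc => PForm.and (if v p then .atom p else .not (.atom p)) acc) (.not .fls)) ↔
      ∀ p ∈ l, (u p ↔ v p) := by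
    intro l
    induction l with
    | nil => simp [PForm.Sat]
    | cons p l ih =>
        by_cases h : v p <;> simp [PForm.Sat, h, ih]
  rw [charForm, key]
  simp

lemma static_sub (T : ActionTheory Act α) : staticForms T ⊆ allForms T := by
  intro x hx; exact Or.inl (Or.inl (Or.inl hx))

lemma eff_sub (T : ActionTheory Act α) (a : Act) : effForms T a ⊆ allForms T := by
  intro x hx; exact Or.inl (Or.inl (Or.inr (Set.mem_iUnion.mpr ⟨a, hx⟩)))

lemma exe_sub (T : ActionTheory Act α) (a : Act) : exeForms T a ⊆ allForms T := by
  intro x hx; exact Or.inl (Or.inr (Set.mem_iUnion.mpr ⟨a, hx⟩))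

lemma inex_sub (T : ActionTheory Act α) (a : Act) : inexForms T a ⊆ allForms T := by
  intro x hx; exact Or.inr (Set.mem_iUnion.mpr ⟨a, hx⟩)

/-- Canonical accessibility condition between valuations. -/
def CanRel (T : ActionTheory Act α) (dep : Dep Act α) (b : Act) (v v' : α → Prop) : Prop :=
  (∀ A'' ∈ T.I b, ¬ PForm.Sat v A'') ∧
  (∀ e ∈ T.E b, PForm.Sat v e.1 → PForm.Sat v' e.2) ∧
  ∀ p : α, (¬ dep b (p, true) → ¬ v p → ¬ v' p) ∧ (¬ dep b (p, false) → v p → v' p)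

/-- Valuations satisfying the static laws. -/
def ValS (T : ActionTheory Act α) : Type := {v : α → Prop // ∀ ψ ∈ T.S, PForm.Sat v ψ}

/-- Extension of a model `M` with canonical valuation worlds. -/
def extModel (T : ActionTheory Act α) (dep : Dep Act α) (a : Act) (M : KModel Act α) :
    KModel Act α where
  W := M.W ⊕ ValS T
  R := fun b u u' =>
    match u, u' with
    | .inl w, .inl w' => b = a ∧ M.R b w w'
    | .inl w, .inr v' => CanRel T dep b (M.V w) v'.1
    | .inr v, .inr v' => CanRel T dep b v.1 v'.1
    | .inr _, .inl _ => False
  V := fun u => match u with | .inl w => M.V w | .inr v => v.1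

/-- Key existence lemma, via PS*: every valuation of `S` triggering an
executability law for `b` has a canonical successor. -/
lemma exists_succ [Fintype α] (T : ActionTheory Act α) (dep : Dep Act α)
    (hPS : PSstar T dep) (b : Act) (A' : PForm α) (hA' : A' ∈ T.X b)
    (v : α → Prop) (hvS : ∀ ψ ∈ T.S, PForm.Sat v ψ) (hvA : PForm.Sat v A') :
    ∃ v' : α → Prop, (∀ ψ ∈ T.S, PForm.Sat v' ψ) ∧ CanRel T dep b v v' := by
  by_contra hno
  push_neg at hno
  have hcons : ConsDep dep (allForms T) (PForm.not (charForm v)).toM := by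
    intro N hN hG x
    have : ¬ MForm.Sat N x (charForm v).toM := by
      intro hx
      rw [Msat_toM, charForm_sat] at hx
      -- x satisfies A'
      have hxA : MForm.Sat N x A'.toM :=
        (Msat_toM N x A').mpr ((psat_congr hx A').mpr hvA)
      -- x triggers the executability law, get a successor
      have hexe := hG (exeLaw b A') (exe_sub T b ⟨A', hA', rfl⟩) x
      have hdiam : MForm.Sat N x (MForm.diam b (.not .fls)) := hexe hxA
      have hy : ∃ y, N.R b x y := by
        simp only [MForm.diam, MForm.Sat] at hdiam
        by_contra hcon
        push_neg at hcon
        exact hdiam (fun y hr => absurd hr (hcon y))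
      obtain ⟨y, hy⟩ := hy
      have hS' : ∀ ψ ∈ T.S, PForm.Sat (N.V y) ψ := fun ψ hψ =>
        (Msat_toM N y ψ).mp (hG ψ.toM (static_sub T ⟨ψ, hψ, rfl⟩) y)
      refine hno (N.V y) hS' ⟨?_, ?_, ?_⟩
      · intro A'' hA'' hvA''
        have hxA'' : MForm.Sat N x A''.toM :=
          (Msat_toM N x A'').mpr ((psat_congr hx A'').mpr hvA'')
        exact (hG (inexLaw b A'') (inex_sub T b ⟨A'', hA'', rfl⟩) x) hxA'' y hy
      · intro e he h1
        have hxe : MForm.Sat N x e.1.toM :=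
          (Msat_toM N x e.1).mpr ((psat_congr hx e.1).mpr h1)
        exact (Msat_toM N y e.2).mp
          ((hG (effLaw b e) (eff_sub T b ⟨e, he, rfl⟩) x) hxe y hy)
      · intro p
        have hp := hN b x y hy p
        constructor
        · intro hd hvp
          exact (hp.1 hd (fun h => hvp ((hx p).mp h)))
        · intro hd hvp
          exact hp.2 hd ((hx p).mpr hvp)
    simpa [PForm.toM, MForm.Sat] using this
  have := hPS _ hcons v hvS
  simp only [PForm.Sat] at this
  exact this ((charForm_sat v v).mpr (fun p => Iff.rfl))

/-- modularity inside the effect laws: under PS*, deducing an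
effect law for `a` only needs `S`, `E_a` and `I_a`. -/
theorem stmt_11 [Fintype Act] [Fintype α] (T : ActionTheory Act α) (dep : Dep Act α)
    (hPS : PSstar T dep) (a : Act) (A C : PForm α) :
    ConsDep dep (allForms T) (effLaw a (A, C)) ↔
    ConsDep dep (staticForms T ∪ effForms T a ∪ inexForms T a) (effLaw a (A, C)) := by
  constructor
  · -- hard direction: via the extended model
    intro hall M hM hΓ
    set M' := extModel T dep a M with hM'
    -- M' is a dep-model
    have dM' : IsDepModel dep M' := by
      intro b u u' hR p
      rcases u with w | v <;> rcases u' with w' | v'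
      · exact hM b w w' hR.2 p
      · exact hR.2.2 p
      · exact hR.elim
      · exact hR.2.2 p
    -- M' globally satisfies all the laws
    have hG : ∀ Ψ ∈ allForms T, Glob M' Ψ := by
      intro Ψ hΨ
      rcases hΨ with ((hs | he) | hx) | hi
      · -- static laws
        obtain ⟨φ, hφ, rfl⟩ := hs
        intro u
        rw [Msat_toM]
        rcases u with w | v
        · exact (Msat_toM M w φ).mp (hΓ φ.toM (Or.inl (Or.inl ⟨φ, hφ, rfl⟩)) w)
        · exact v.2 φ hφ
      · -- effect laws
        rw [Set.mem_iUnion] at he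
        obtain ⟨b, e, heb, rfl⟩ := he
        intro u h1 u' hR
        rcases u with w | v <;> rcases u' with w' | v'
        · obtain ⟨rfl, hr⟩ := hR
          have heff := hΓ (effLaw b e) (Or.inl (Or.inr ⟨e, heb, rfl⟩)) w
          have h1' : MForm.Sat M w e.1.toM :=
            (Msat_toM M w e.1).mpr ((Msat_toM M' (Sum.inl w) e.1).mp h1)
          exact (Msat_toM M' (Sum.inl w') e.2).mpr
            ((Msat_toM M w' e.2).mp (heff h1' w' hr))
        · exact (Msat_toM M' (Sum.inr v') e.2).mpr
            (hR.2.1 e heb ((Msat_toM M' (Sum.inl w) e.1).mp h1))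
        · exact hR.elim
        · exact (Msat_toM M' (Sum.inr v') e.2).mpr
            (hR.2.1 e heb ((Msat_toM M' (Sum.inr v) e.1).mp h1))
      · -- executability laws
        rw [Set.mem_iUnion] at hx
        obtain ⟨b, A', hAb, rfl⟩ := hx
        intro u h1
        have hvS : ∀ ψ ∈ T.S, PForm.Sat (M'.V u) ψ := by
          intro ψ hψ
          rcases u with w | v
          · exact (Msat_toM M w ψ).mp (hΓ ψ.toM (Or.inl (Or.inl ⟨ψ, hψ, rfl⟩)) w)
          · exact v.2 ψ hψ
        obtain ⟨v', hv'S, hcan⟩ := exists_succ T dep hPS b A' hAb (M'.V u) hvS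
          ((Msat_toM M' u A').mp h1)
        have hsucc : M'.R b u (Sum.inr ⟨v', hv'S⟩) := by
          rcases u with w | v <;> exact hcan
        intro hbox
        exact hbox (Sum.inr ⟨v', hv'S⟩) hsucc (fun h => h)
      · -- inexecutability laws
        rw [Set.mem_iUnion] at hi
        obtain ⟨b, A'', hAb, rfl⟩ := hi
        intro u h1 u' hR
        rcases u with w | v <;> rcases u' with w' | v'
        · obtain ⟨rfl, hr⟩ := hR
          have hinex := hΓ (inexLaw b A'') (Or.inr ⟨A'', hAb, rfl⟩) w
          have h1' : MForm.Sat M w A''.toM :=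
            (Msat_toM M w A'').mpr ((Msat_toM M' (Sum.inl w) A'').mp h1)
          exact hinex h1' w' hr
        · exact hR.1 A'' hAb ((Msat_toM M' (Sum.inl w) A'').mp h1)
        · exact hR.elim
        · exact hR.1 A'' hAb ((Msat_toM M' (Sum.inr v) A'').mp h1)
    have heff := hall M' dM' hG
    intro w h1 w' hr
    have h1' : MForm.Sat M' (Sum.inl w) A.toM :=
      (Msat_toM M' (Sum.inl w) A).mpr ((Msat_toM M w A).mp h1)
    have hr' : M'.R a (Sum.inl w) (Sum.inl w') := ⟨rfl, hr⟩
    exact (Msat_toM M w' C).mpr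
      ((Msat_toM M' (Sum.inl w') C).mp (heff (Sum.inl w) h1' (Sum.inl w') hr'))
  · -- easy direction: monotonicity
    intro h M hM hΓ
    refine h M hM (fun Ψ hΨ => hΓ Ψ ?_)
    rcases hΨ with (hs | he) | hi
    · exact static_sub T hs
    · exact eff_sub T a he
    · exact inex_sub T a hi
end

section
/- Let S be a set of classical formulas and, for action a, E_a a set of effect laws and I_a a set of inexecutability laws. Suppose that for every subset Ê ⊆ E_a, if S ∪ {⋀antecedents(Ê)} is classically consistent then S ∪ {⋀consequents(Ê)} is classically consistent. Then S, E_a, I_a ⊨_K A → [a]⊥ implies S, I_a ⊨_K A → [a]⊥, for any classical A. -/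
variable {Act α : Type}

lemma sat_toM {Act α : Type} (M : KModel Act α) (w : M.W) (φ : PForm α) :
    MForm.Sat M w (φ.toM : MForm Act α) ↔ PForm.Sat (M.V w) φ := by
  induction φ with
  | atom p => exact Iff.rfl
  | fls => exact Iff.rfl
  | not φ ih => simp [PForm.toM, MForm.Sat, PForm.Sat, ih]
  | and φ ψ ih1 ih2 => simp [PForm.toM, MForm.Sat, PForm.Sat, ih1, ih2]
  | or φ ψ ih1 ih2 => simp [PForm.toM, MForm.Sat, PForm.Sat, ih1, ih2]
  | imp φ ψ ih1 ih2 => simp [PForm.toM, MForm.Sat, PForm.Sat, ih1, ih2]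

/-- Lemma: if no subset of the effect laws of `a` has a
classically `S`-consistent antecedent conjunction with an `S`-inconsistent
consequent conjunction, then the effect laws contribute no new
inexecutabilities in K. -/
theorem stmt_15 [Fintype α] {Act : Type} (T : ActionTheory Act α) (a : Act)
    (hyp : ∀ Esub : Set (PForm α × PForm α), Esub ⊆ T.E a →
      (∃ v : α → Prop, (∀ φ ∈ T.S, PForm.Sat v φ) ∧ ∀ e ∈ Esub, PForm.Sat v e.1) →
      (∃ v : α → Prop, (∀ φ ∈ T.S, PForm.Sat v φ) ∧ ∀ e ∈ Esub, PForm.Sat v e.2)) :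
    ∀ A : PForm α,
      ConsK (staticForms T ∪ effForms T a ∪ inexForms T a) (inexLaw a A) →
      ConsK (staticForms T ∪ inexForms T a) (inexLaw a A) := by
  intro A hcons M hM
  -- staticForms and inexForms hold globally in M
  have hS : ∀ φ ∈ T.S, ∀ w : M.W, PForm.Sat (M.V w) φ := by
    intro φ hφ w
    have := hM φ.toM (Or.inl ⟨φ, hφ, rfl⟩) w
    exact (sat_toM M w φ).1 this
  have hI : ∀ B ∈ T.I a, ∀ w : M.W, PForm.Sat (M.V w) B → ∀ w', ¬ M.R a w w' := by
    intro B hB w hBw w' hR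
    have := hM (inexLaw a B) (Or.inr ⟨B, hB, rfl⟩) w
    exact this ((sat_toM M w B).2 hBw) w' hR
  -- choose, for each world, a valuation satisfying S and the consequents of the
  -- effect laws whose antecedents hold at that world
  have hchoice : ∀ w : M.W, ∃ v : α → Prop, (∀ φ ∈ T.S, PForm.Sat v φ) ∧
      ∀ e ∈ {e ∈ T.E a | PForm.Sat (M.V w) e.1}, PForm.Sat v e.2 := by
    intro w
    apply hyp {e ∈ T.E a | PForm.Sat (M.V w) e.1} (fun e he => he.1)
    exact ⟨M.V w, fun φ hφ => hS φ hφ w, fun e he => he.2⟩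
  choose vnew hvnewS hvnewE using hchoice
  -- build the extended model
  set M' : KModel Act α :=
    { W := M.W ⊕ M.W
      R := fun b x y => b = a ∧ ∃ u, x = Sum.inl u ∧ y = Sum.inr u ∧ ∃ u', M.R a u u'
      V := fun x => match x with | .inl u => M.V u | .inr u => vnew u } with hM'
  have hVl : ∀ u : M.W, M'.V (Sum.inl u) = M.V u := fun u => rfl
  have hVr : ∀ u : M.W, M'.V (Sum.inr u) = vnew u := fun u => rfl
  -- M' globally satisfies S ∪ E_a ∪ I_a
  have hglob : ∀ Ψ ∈ (staticForms T ∪ effForms T a ∪ inexForms T a), Glob M' Ψ := by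
    intro Ψ hΨ
    simp only [Set.mem_union, staticForms, effForms, inexForms, Set.mem_image] at hΨ
    rcases hΨ with (⟨φ, hφ, rfl⟩ | ⟨e, he, rfl⟩) | ⟨B, hB, rfl⟩
    · rintro (u | u)
      · exact (sat_toM M' (Sum.inl u) φ).2 (hS φ hφ u)
      · exact (sat_toM M' (Sum.inr u) φ).2 (hvnewS u φ hφ)
    · intro x hant w' hR
      match x, hant, hR with
      | Sum.inl u, hant, hR =>
        obtain ⟨-, u', hu1, hu2, -⟩ := hR
        have huu : u' = u := Sum.inl.inj hu1.symm
        subst hu2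
        rw [huu]
        have hae : PForm.Sat (M.V u) e.1 := (sat_toM M' (Sum.inl u) e.1).1 hant
        exact (sat_toM M' (Sum.inr u) e.2).2 (hvnewE u e ⟨he, hae⟩)
      | Sum.inr u, hant, hR =>
        obtain ⟨-, u', hu1, -⟩ := hR
        exact absurd hu1 (by simp)
    · intro x hant w' hR
      match x, hant, hR with
      | Sum.inl u, hant, hR =>
        obtain ⟨-, u', hu1, -, ⟨u'', hu''⟩⟩ := hR
        have huu : u' = u := Sum.inl.inj hu1.symm
        rw [huu] at hu''
        have hB' : PForm.Sat (M.V u) B := (sat_toM M' (Sum.inl u) B).1 hant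
        exact hI B hB u hB' u'' hu''
      | Sum.inr u, hant, hR =>
        obtain ⟨-, u', hu1, -⟩ := hR
        exact absurd hu1 (by simp)
  have hglob' := hcons M' hglob
  -- conclude
  intro w hA w' hR
  have hAw : PForm.Sat (M.V w) A := (sat_toM M w A).1 hA
  have := hglob' (Sum.inl w) ((sat_toM M' (Sum.inl w) A).2 hAw) (Sum.inr w)
    ⟨rfl, w, rfl, rfl, w', hR⟩
  exact this
end
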